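/- Let u_{i₁},…,u_{iₙ} be unit vectors in ℂ^m, let ζ_{i₁},…,ζ_{iₙ} be distinct complex numbers with positive imaginary parts, and set d_{pq} = (i/(ζ_q - ζ_p*))⟨u_p, u_q⟩. Assume det[d_{i_a i_b}]_{a,b=1}^{n-1} ≠ 0 and det[d_{i_a i_b}]_{a,b=1}^{n} ≠ 0. Define the polarization vector u_{{i₁,…,i_{n-1}}, iₙ} = e^{φ} · ∏_{l=1}^{n-1}((ζ_{i_l}* - ζ_{iₙ}*)/(ζ_{i_l} - ζ_{iₙ}*)) · V / det[d_{i_a i_b}]_{a,b=1}^{n-1}, where V is the ℂ^m-valued Laplace expansion along the last column of the n×n array with entries d_{i_a i_b} (b ≤ n-1) and last column u_{i_a}, and where e^{-2φ} = ∏_{l=1}^{n-1}|(ζ_{i_l}-ζ_{iₙ})/(ζ_{i_l}-ζ_{iₙ}*)|² · det[d]ₙ / (d_{iₙiₙ}·det[d]_{n-1}) with det[d]ₙ = det[d_{i_a i_b}]_{a,b=1}^n and det[d]_{n-1} = det[d_{i_a i_b}]_{a,b=1}^{n-1}. Then ‖u_{{i₁,…,i_{n-1}}, iₙ}‖ = 1.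 -/

import Mathlib

open Complex Matrix BigOperators

noncomputable section

/-- Hermitian inner product on ℂ^m, linear in the first slot. -/
def herm {m : ℕ} (u v : Fin m → ℂ) : ℂ := ∑ a, u a * (starRingEnd ℂ) (v a)

theorem stmt9 {m n : ℕ} (ζ : Fin (n+1) → ℂ) (hinj : Function.Injective ζ)
    (him : ∀ j, 0 < (ζ j).im)
    (u : Fin (n+1) → Fin m → ℂ) (hu : ∀ j, herm (u j) (u j) = 1)
    (d : Fin (n+1) → Fin (n+1) → ℂ)
    (hd : ∀ p q, d p q = Complex.I / (ζ q - (starRingEnd ℂ) (ζ p)) * herm (u p) (u q))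
    (Dn1 Dn : ℂ)
    (hDn1 : Dn1 = Matrix.det (fun a b : Fin n => d a.castSucc b.castSucc))
    (hDn : Dn = Matrix.det (fun a b : Fin (n+1) => d a b))
    (hDn1ne : Dn1 ≠ 0) (hDnne : Dn ≠ 0)
    -- r = e^{-2φ}, assumed to be the indicated positive real number
    (r : ℝ) (hr : 0 < r)
    (hre : (r : ℂ) = ((∏ l : Fin n,
        (‖(ζ l.castSucc - ζ (Fin.last n)) /
          (ζ l.castSucc - (starRingEnd ℂ) (ζ (Fin.last n)))‖)^2 : ℝ) : ℂ) *
        Dn / (d (Fin.last n) (Fin.last n) * Dn1)) :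
    -- V : vector determinant with scalar columns d_{· i_b}, b ≤ n-1, and vector last column
    let V : Fin m → ℂ := fun a =>
      Matrix.det (fun p q : Fin (n+1) =>
        if h : (q : ℕ) < n then d p (Fin.castSucc ⟨q, h⟩) else u p a)
    let upol : Fin m → ℂ := fun a =>
      (((Real.sqrt r)⁻¹ : ℝ) : ℂ) *
        (∏ l : Fin n, ((starRingEnd ℂ) (ζ l.castSucc) - (starRingEnd ℂ) (ζ (Fin.last n))) /
          (ζ l.castSucc - (starRingEnd ℂ) (ζ (Fin.last n)))) * V a / Dn1
    herm upol upol = 1 := by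
  intro V upol
  set L : Fin (n+1) := Fin.last n with hL
  set A : Matrix (Fin (n+1)) (Fin (n+1)) ℂ := Matrix.of d with hA
  have hAdet : A.det = Dn := by rw [hDn]; rfl
  -- conjugation symmetry of herm
  have hconjherm : ∀ v w : Fin m → ℂ, (starRingEnd ℂ) (herm v w) = herm w v := by
    intro v w
    simp only [herm, map_sum, _root_.map_mul, Complex.conj_conj]
    exact Finset.sum_congr rfl fun a _ => mul_comm _ _
  -- denominators nonzero
  have hzne : ∀ p q : Fin (n+1), ζ q - (starRingEnd ℂ) (ζ p) ≠ 0 := by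
    intro p q h
    have h2 : (ζ q - (starRingEnd ℂ) (ζ p)).im = 0 := by rw [h]; simp
    rw [Complex.sub_im, Complex.conj_im] at h2
    have := him p; have := him q; linarith
  -- Hermitian symmetry of d
  have hdconj : ∀ p q, (starRingEnd ℂ) (d p q) = d q p := by
    intro p q
    rw [hd, hd, _root_.map_mul, map_div₀, Complex.conj_I, map_sub, Complex.conj_conj, hconjherm]
    congr 1
    rw [neg_div, show ζ p - (starRingEnd ℂ) (ζ q) = -((starRingEnd ℂ) (ζ q) - ζ p) by ring,
      div_neg]
  have hAherm : A.IsHermitian := by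
    ext p q
    simp only [Matrix.conjTranspose_apply]
    exact hdconj q p
  -- herm (u p) (u q) recovered from d
  have huv : ∀ p q, herm (u p) (u q) = d p q * (ζ q - (starRingEnd ℂ) (ζ p)) / Complex.I := by
    intro p q
    rw [hd]
    field_simp [Complex.I_ne_zero, hzne p q]
  -- cofactors
  set k : Fin (n+1) → ℂ := fun p => A.adjugate L p with hk
  -- V as cofactor expansion
  have hVa : ∀ a, V a = ∑ p, u p a * k p := by
    intro a
    have hupd : (fun p q : Fin (n+1) =>
        if h : (q : ℕ) < n then d p (Fin.castSucc ⟨q, h⟩) else u p a)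
        = A.updateCol L (fun p => u p a) := by
      funext p q
      by_cases h : (q : ℕ) < n
      · have hqL : q ≠ L := by
          intro he; rw [he] at h; simp [hL] at h
        rw [dif_pos h, Matrix.updateCol_apply, if_neg hqL]
        rfl
      · have hqL : q = L := by
          have h2 := q.isLt
          have h3 : (q:ℕ) = n := by omega
          exact Fin.ext (by simpa [hL] using h3)
        rw [dif_neg h, Matrix.updateCol_apply, if_pos hqL]
    show Matrix.det _ = _
    rw [hupd, ← Matrix.cramer_apply, Matrix.cramer_eq_adjugate_mulVec]
    rw [Matrix.mulVec, dotProduct]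
    exact Finset.sum_congr rfl fun p _ => mul_comm _ _
  have hkconj : ∀ q, (starRingEnd ℂ) (k q) = A.adjugate q L := by
    intro q
    have := hAherm.adjugate
    calc (starRingEnd ℂ) (A.adjugate L q) = A.adjugateᴴ q L := rfl
    _ = A.adjugate q L := by rw [this.eq]
  -- row/column identities
  have hrow : ∀ q, ∑ p, k p * d p q = Dn * (if L = q then 1 else 0) := by
    intro q
    have := congrArg (fun M : Matrix (Fin (n+1)) (Fin (n+1)) ℂ => M L q) (Matrix.adjugate_mul A)
    simp only [Matrix.mul_apply, Matrix.smul_apply, Matrix.one_apply, smul_eq_mul] at this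
    rw [hAdet] at this
    exact this
  have hcol : ∀ p, ∑ q, d p q * A.adjugate q L = Dn * (if p = L then 1 else 0) := by
    intro p
    have := congrArg (fun M : Matrix (Fin (n+1)) (Fin (n+1)) ℂ => M p L) (Matrix.mul_adjugate A)
    simp only [Matrix.mul_apply, Matrix.smul_apply, Matrix.one_apply, smul_eq_mul] at this
    rw [hAdet] at this
    exact this
  -- the minor: adjugate at (L, L)
  have hadjLL : A.adjugate L L = Dn1 := by
    rw [Matrix.adjugate_apply, hDn1]
    rw [Matrix.det_succ_row _ L]
    rw [Finset.sum_eq_single L]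
    · rw [Matrix.updateRow_self]
      simp only [Pi.single_eq_same]
      have h1 : ((-1 : ℂ)) ^ ((L : ℕ) + (L : ℕ)) = 1 := by
        rw [pow_add, ← mul_pow]; norm_num
      simp only [h1, one_mul, mul_one]
      congr 1
      funext a b
      simp only [Matrix.submatrix_apply, hL, Fin.succAbove_last]
      rw [Matrix.updateRow_ne (Fin.ne_of_lt (Fin.castSucc_lt_last a))]
      rfl
    · intro j _ hj
      rw [Matrix.updateRow_self]
      simp [Pi.single_eq_of_ne hj]
    · simp
  -- herm V V
  have hVV : herm V V = Dn * Dn1 * ((ζ L - (starRingEnd ℂ) (ζ L)) / Complex.I) := by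
    have step1 : herm V V
        = ∑ p, ∑ q, (k p * A.adjugate q L) * (d p q * (ζ q - (starRingEnd ℂ) (ζ p)) / Complex.I) := by
      calc herm V V
          = ∑ a, (∑ p, u p a * k p) * (∑ q, (starRingEnd ℂ) (u q a) * A.adjugate q L) := by
            refine Finset.sum_congr rfl fun a _ => ?_
            rw [hVa]
            congr 1
            rw [map_sum]
            exact Finset.sum_congr rfl fun q _ => by rw [_root_.map_mul, hkconj]
        _ = ∑ a, ∑ p, ∑ q, (u p a * k p) * ((starRingEnd ℂ) (u q a) * A.adjugate q L) := by
            exact Finset.sum_congr rfl fun a _ => Finset.sum_mul_sum _ _ _ _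
        _ = ∑ p, ∑ a, ∑ q, (u p a * k p) * ((starRingEnd ℂ) (u q a) * A.adjugate q L) :=
            Finset.sum_comm
        _ = ∑ p, ∑ q, ∑ a, (u p a * k p) * ((starRingEnd ℂ) (u q a) * A.adjugate q L) :=
            Finset.sum_congr rfl fun p _ => Finset.sum_comm
        _ = ∑ p, ∑ q, (k p * A.adjugate q L) * herm (u p) (u q) := by
            refine Finset.sum_congr rfl fun p _ => Finset.sum_congr rfl fun q _ => ?_
            simp only [herm, Finset.mul_sum]
            exact Finset.sum_congr rfl fun a _ => by ring
        _ = ∑ p, ∑ q, (k p * A.adjugate q L) * (d p q * (ζ q - (starRingEnd ℂ) (ζ p)) / Complex.I) := by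
            refine Finset.sum_congr rfl fun p _ => Finset.sum_congr rfl fun q _ => ?_
            rw [huv]
    rw [step1]
    have hsplit : (∑ p, ∑ q, (k p * A.adjugate q L) * (d p q * (ζ q - (starRingEnd ℂ) (ζ p)) / Complex.I))
        = (∑ q, (∑ p, k p * d p q) * (A.adjugate q L * ((ζ q - (starRingEnd ℂ) (ζ L)) / Complex.I)))
          - (∑ p, (k p * (((starRingEnd ℂ) (ζ p) - (starRingEnd ℂ) (ζ L)) / Complex.I))
              * (∑ q, d p q * A.adjugate q L)) := by
      have h1 : ∀ q : Fin (n+1), (∑ p, k p * d p q) * (A.adjugate q L * ((ζ q - (starRingEnd ℂ) (ζ L)) / Complex.I))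
          = ∑ p, (k p * d p q) * (A.adjugate q L * ((ζ q - (starRingEnd ℂ) (ζ L)) / Complex.I)) :=
        fun q => Finset.sum_mul _ _ _
      have h2 : ∀ p : Fin (n+1), (k p * (((starRingEnd ℂ) (ζ p) - (starRingEnd ℂ) (ζ L)) / Complex.I))
            * (∑ q, d p q * A.adjugate q L)
          = ∑ q, (k p * (((starRingEnd ℂ) (ζ p) - (starRingEnd ℂ) (ζ L)) / Complex.I))
              * (d p q * A.adjugate q L) :=
        fun p => Finset.mul_sum _ _ _
      simp only [h1, h2]
      rw [show (∑ q : Fin (n+1), ∑ p : Fin (n+1), k p * d p q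
            * (A.adjugate q L * ((ζ q - (starRingEnd ℂ) (ζ L)) / Complex.I)))
          = ∑ p : Fin (n+1), ∑ q : Fin (n+1), k p * d p q
            * (A.adjugate q L * ((ζ q - (starRingEnd ℂ) (ζ L)) / Complex.I)) from Finset.sum_comm]
      rw [← Finset.sum_sub_distrib]
      refine Finset.sum_congr rfl fun p _ => ?_
      rw [← Finset.sum_sub_distrib]
      refine Finset.sum_congr rfl fun q _ => ?_
      ring
    rw [hsplit]
    have hfirst : (∑ q, (∑ p, k p * d p q) * (A.adjugate q L * ((ζ q - (starRingEnd ℂ) (ζ L)) / Complex.I)))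
        = Dn * Dn1 * ((ζ L - (starRingEnd ℂ) (ζ L)) / Complex.I) := by
      simp only [hrow, ite_mul, one_mul, zero_mul, mul_ite, mul_zero, mul_one]
      rw [Finset.sum_ite_eq]
      simp [hadjLL, mul_assoc]
    have hsecond : (∑ p, (k p * (((starRingEnd ℂ) (ζ p) - (starRingEnd ℂ) (ζ L)) / Complex.I))
          * (∑ q, d p q * A.adjugate q L)) = 0 := by
      simp only [hcol, mul_ite, mul_zero, mul_one]
      rw [Finset.sum_ite_eq']
      simp
    rw [hfirst, hsecond, sub_zero]
  -- final algebra
  set P : ℂ := ∏ l : Fin n, ((starRingEnd ℂ) (ζ l.castSucc) - (starRingEnd ℂ) (ζ L)) /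
      (ζ l.castSucc - (starRingEnd ℂ) (ζ L)) with hPdef
  set Q : ℝ := ∏ l : Fin n, (‖(ζ l.castSucc - ζ L) /
      (ζ l.castSucc - (starRingEnd ℂ) (ζ L))‖)^2 with hQdef
  set c0 : ℂ := (((Real.sqrt r)⁻¹ : ℝ) : ℂ) with hc0
  set C : ℂ := c0 * P / Dn1 with hC
  have hupolC : ∀ a, upol a = C * V a := by
    intro a
    show c0 * P * V a / Dn1 = C * V a
    rw [hC]; ring
  have hhup : herm upol upol = (C * (starRingEnd ℂ) C) * herm V V := by
    simp only [herm, hupolC, _root_.map_mul, Finset.mul_sum]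
    exact Finset.sum_congr rfl fun a _ => by ring
  -- conjugates
  have hDn1conj : (starRingEnd ℂ) Dn1 = Dn1 := by
    have hMh : ((fun a b : Fin n => d a.castSucc b.castSucc) : Matrix (Fin n) (Fin n) ℂ)ᴴ
        = ((fun a b : Fin n => d a.castSucc b.castSucc) : Matrix (Fin n) (Fin n) ℂ) := by
      funext a b
      show (starRingEnd ℂ) (d b.castSucc a.castSucc) = d a.castSucc b.castSucc
      exact hdconj _ _
    calc (starRingEnd ℂ) Dn1
        = star (Matrix.det ((fun a b : Fin n => d a.castSucc b.castSucc)
            : Matrix (Fin n) (Fin n) ℂ)) := by rw [hDn1]; rfl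
      _ = Matrix.det (((fun a b : Fin n => d a.castSucc b.castSucc)
            : Matrix (Fin n) (Fin n) ℂ)ᴴ) := (Matrix.det_conjTranspose _).symm
      _ = Dn1 := by rw [hMh, hDn1]
  have hPconj : P * (starRingEnd ℂ) P = (Q : ℂ) := by
    rw [hPdef, map_prod, ← Finset.prod_mul_distrib, hQdef]
    push_cast
    refine Finset.prod_congr rfl fun l _ => ?_
    rw [Complex.mul_conj]
    rw [← Complex.sq_norm]
    have habs : ‖((starRingEnd ℂ) (ζ l.castSucc) - (starRingEnd ℂ) (ζ L)) /
        (ζ l.castSucc - (starRingEnd ℂ) (ζ L))‖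
        = ‖(ζ l.castSucc - ζ L) / (ζ l.castSucc - (starRingEnd ℂ) (ζ L))‖ := by
      rw [norm_div, norm_div]
      congr 1
      rw [← map_sub, Complex.norm_conj]
    rw [habs]
    push_cast
    ring
  have hc0sq : c0 * (starRingEnd ℂ) c0 = ((r : ℂ))⁻¹ := by
    rw [hc0, Complex.conj_ofReal, ← Complex.ofReal_mul, ← mul_inv, Real.mul_self_sqrt hr.le]
    push_cast
    ring
  have hrne : (r : ℂ) ≠ 0 := Complex.ofReal_ne_zero.mpr hr.ne'
  have hwne : ζ L - (starRingEnd ℂ) (ζ L) ≠ 0 := hzne L L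
  have hdLL : d L L = Complex.I / (ζ L - (starRingEnd ℂ) (ζ L)) := by
    rw [hd, hu, mul_one]
  have hkey : (Q : ℂ) * Dn * (ζ L - (starRingEnd ℂ) (ζ L)) = (r : ℂ) * Complex.I * Dn1 := by
    rw [hre, hdLL]
    field_simp
  have hCC : C * (starRingEnd ℂ) C = (r : ℂ)⁻¹ * (Q : ℂ) / (Dn1 * Dn1) := by
    rw [hC, map_div₀, _root_.map_mul, hDn1conj]
    calc c0 * P / Dn1 * ((starRingEnd ℂ) c0 * (starRingEnd ℂ) P / Dn1)
        = (c0 * (starRingEnd ℂ) c0) * (P * (starRingEnd ℂ) P) / (Dn1 * Dn1) := by ring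
      _ = (r : ℂ)⁻¹ * (Q : ℂ) / (Dn1 * Dn1) := by rw [hc0sq, hPconj]
  rw [hhup, hVV, hCC]
  field_simp
  linear_combination hkey

end
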